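/- For every N ≥ 1, every K ∈ ℕ, and every pair of starting positions p₁, p₂ ∈ {0,1}^N, the total variation distance between the K-step distributions of the lazy hypercube walk satisfies the lower bound TV(μ_K(p₁), μ_K(p₂)) ≥ ((N−1)/(N+1))^K · |w_H(p₁) − w_H(p₂)|; in particular, when p₁ is the all-zeros vector and p₂ is the all-ones vector, TV(μ_K(p₁), μ_K(p₂)) ≥ ((N−1)/(N+1))^K. -/

import Mathlib

open scoped ENNReal

/-- Total variation distance between two distributions: `(1/2) Σ_x |μ(x) − ν(x)|`. -/
noncomputable def tvDist {X : Type*} (μ ν : PMF X) : ℝ≥0∞ :=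
  (1 / 2) * ∑' x, max (μ x - ν x) (ν x - μ x)

/-- One step of the lazy hypercube walk on `{0,1}^N`: sample `i` uniformly from `{0,…,N}`;
if `i = 0` stay put, otherwise flip coordinate `i`. -/
noncomputable def hcStep (N : ℕ) (p : Fin N → Bool) : PMF (Fin N → Bool) :=
  (PMF.uniformOfFintype (Fin (N + 1))).bind fun i =>
    PMF.pure fun j => if (j : ℕ) + 1 = (i : ℕ) then !(p j) else p j

/-- Distribution of the position of the lazy hypercube walk after `K` steps from `p`. -/
noncomputable def hcWalk (N : ℕ) (p : Fin N → Bool) : ℕ → PMF (Fin N → Bool)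
  | 0 => PMF.pure p
  | (K + 1) => (hcWalk N p K).bind (hcStep N)

/-- Normalized Hamming weight: the fraction of coordinates equal to `1`. -/
noncomputable def wH {N : ℕ} (q : Fin N → Bool) : ℝ :=
  (1 / (N : ℝ)) * ((Finset.univ.filter fun j => q j = true).card : ℝ)

/-! ### Auxiliary lemmas -/

/-- Expectation of a real observable under a PMF on a fintype. -/
noncomputable def ex {X : Type*} [Fintype X] (μ : PMF X) (f : X → ℝ) : ℝ :=
  ∑ x, (μ x).toReal * f x

lemma sum_toReal_eq_one {X : Type*} [Fintype X] (μ : PMF X) :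
    ∑ x, (μ x).toReal = 1 := by
  have h := μ.tsum_coe
  rw [tsum_fintype] at h
  calc ∑ x, (μ x).toReal = (∑ x, μ x).toReal :=
        (ENNReal.toReal_sum (fun a _ => PMF.apply_ne_top μ a)).symm
    _ = 1 := by rw [h]; simp

lemma ex_pure {X : Type*} [Fintype X] [DecidableEq X] (a : X) (f : X → ℝ) :
    ex (PMF.pure a) f = f a := by
  simp [ex, PMF.pure_apply, apply_ite ENNReal.toReal, ite_mul, Finset.sum_ite_eq']

lemma ex_bind {A X : Type*} [Fintype A] [Fintype X] (μ : PMF A) (g : A → PMF X) (f : X → ℝ) :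
    ex (μ.bind g) f = ∑ a, (μ a).toReal * ex (g a) f := by
  unfold ex
  have h : ∀ x, ((μ.bind g) x).toReal = ∑ a, (μ a).toReal * (g a x).toReal := by
    intro x
    rw [PMF.bind_apply, tsum_fintype, ENNReal.toReal_sum
      (fun a _ => ENNReal.mul_ne_top (PMF.apply_ne_top _ _) (PMF.apply_ne_top _ _))]
    exact Finset.sum_congr rfl fun a _ => ENNReal.toReal_mul
  simp_rw [h, Finset.sum_mul]
  rw [Finset.sum_comm]
  simp_rw [Finset.mul_sum, mul_assoc]

lemma max_sub_eq (a b : ℝ≥0∞) (ha : a ≠ ∞) (hb : b ≠ ∞) :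
    max (a - b) (b - a) = ENNReal.ofReal |a.toReal - b.toReal| := by
  rcases le_total a b with h | h
  · rw [tsub_eq_zero_of_le h, max_eq_right zero_le,
      abs_of_nonpos (sub_nonpos.mpr ((ENNReal.toReal_le_toReal ha hb).mpr h)), neg_sub,
      ← ENNReal.toReal_sub_of_le h hb,
      ENNReal.ofReal_toReal ((tsub_le_self.trans_lt hb.lt_top).ne)]
  · rw [tsub_eq_zero_of_le h, max_eq_left zero_le,
      abs_of_nonneg (sub_nonneg.mpr ((ENNReal.toReal_le_toReal hb ha).mpr h)),
      ← ENNReal.toReal_sub_of_le h ha,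
      ENNReal.ofReal_toReal ((tsub_le_self.trans_lt ha.lt_top).ne)]

lemma tvDist_eq {X : Type*} [Fintype X] (μ ν : PMF X) :
    tvDist μ ν = ENNReal.ofReal ((1/2) * ∑ x, |(μ x).toReal - (ν x).toReal|) := by
  rw [tvDist, tsum_fintype]
  have h2 : (1/2 : ℝ≥0∞) = ENNReal.ofReal (1/2) := by
    rw [ENNReal.ofReal_div_of_pos (by norm_num)]; norm_num
  rw [ENNReal.ofReal_mul (by norm_num), ← h2,
    ENNReal.ofReal_sum_of_nonneg (fun x _ => abs_nonneg _)]
  congr 1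
  exact Finset.sum_congr rfl fun x _ =>
    max_sub_eq _ _ (PMF.apply_ne_top _ _) (PMF.apply_ne_top _ _)

lemma abs_ex_sub_le {X : Type*} [Fintype X] (μ ν : PMF X) (f : X → ℝ)
    (h0 : ∀ x, 0 ≤ f x) (h1 : ∀ x, f x ≤ 1) :
    ENNReal.ofReal |ex μ f - ex ν f| ≤ tvDist μ ν := by
  rw [tvDist_eq]
  apply ENNReal.ofReal_le_ofReal
  set d : X → ℝ := fun x => (μ x).toReal - (ν x).toReal with hd
  have hkey : ex μ f - ex ν f = ∑ x, d x * (f x - 1/2) := by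
    simp only [ex, hd, mul_sub, sub_mul, Finset.sum_sub_distrib, ← Finset.sum_mul]
    rw [sum_toReal_eq_one, sum_toReal_eq_one]
    ring
  rw [hkey]
  calc |∑ x, d x * (f x - 1/2)| ≤ ∑ x, |d x * (f x - 1/2)| :=
        Finset.abs_sum_le_sum_abs _ _
    _ ≤ ∑ x, |d x| * (1/2) := by
        apply Finset.sum_le_sum
        intro x _
        rw [abs_mul]
        exact mul_le_mul_of_nonneg_left
          (abs_le.mpr ⟨by linarith [h0 x], by linarith [h1 x]⟩) (abs_nonneg _)
    _ = (1/2) * ∑ x, |d x| := by rw [← Finset.sum_mul]; ring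

lemma wH_eq {N : ℕ} (q : Fin N → Bool) :
    wH q = (1 / (N : ℝ)) * ∑ j, (if q j then (1:ℝ) else 0) := by
  rw [wH, Finset.card_filter]
  push_cast
  simp

lemma ite_count {N : ℕ} (A B : ℝ) (i₀ : Fin (N+1)) :
    ∑ i : Fin (N+1), (if i = i₀ then A else B) = A + (N : ℝ) * B := by
  have h : ∀ i : Fin (N+1), (if i = i₀ then A else B) = B + (if i = i₀ then A - B else 0) := by
    intro i; split <;> ring
  simp_rw [h, Finset.sum_add_distrib, Finset.sum_const, Finset.sum_ite_eq']
  simp [Finset.card_univ]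
  ring

lemma ex_hcStep (N : ℕ) (hN : 1 ≤ N) (p : Fin N → Bool) :
    ex (hcStep N p) wH = (((N:ℝ)-1)/((N:ℝ)+1)) * wH p + 1/((N:ℝ)+1) := by
  have hN0 : (N : ℝ) ≠ 0 := Nat.cast_ne_zero.mpr (by omega)
  rw [hcStep, ex_bind]
  simp only [ex_pure, PMF.uniformOfFintype_apply, Fintype.card_fin]
  have hu : ((↑(N + 1) : ℝ≥0∞)⁻¹).toReal = ((N:ℝ)+1)⁻¹ := by
    rw [ENNReal.toReal_inv]
    norm_num
    rw [ENNReal.toReal_add (ENNReal.natCast_ne_top N) ENNReal.one_ne_top]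
    simp
  simp_rw [hu, wH_eq]
  have hcond : ∀ (i : Fin (N+1)) (j : Fin N),
      (if (if (j : ℕ) + 1 = (i : ℕ) then !(p j) else p j) then (1:ℝ) else 0)
        = (if i = j.succ then (if !(p j) then (1:ℝ) else 0) else (if p j then (1:ℝ) else 0)) := by
    intro i j
    have : ((j : ℕ) + 1 = (i : ℕ)) ↔ (i = j.succ) := by
      rw [Fin.ext_iff, Fin.val_succ, eq_comm]
    rw [apply_ite (fun b : Bool => if b then (1:ℝ) else 0), if_congr this rfl rfl]
  simp_rw [hcond]
  rw [← Finset.mul_sum, ← Finset.mul_sum, Finset.sum_comm]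
  simp_rw [ite_count]
  have hA : ∀ j, (if !(p j) then (1:ℝ) else 0) = 1 - (if p j then (1:ℝ) else 0) := by
    intro j; cases p j <;> simp
  simp_rw [hA, Finset.sum_add_distrib, Finset.sum_sub_distrib, Finset.sum_const,
    ← Finset.mul_sum, Finset.card_univ, Fintype.card_fin]
  have hw : ∑ j, (if p j then (1:ℝ) else 0) = (N : ℝ) * wH p := by
    rw [wH_eq]; field_simp
  rw [hw]
  have hN1 : (N : ℝ) + 1 ≠ 0 := by positivity
  field_simp
  ring

lemma ex_hcWalk (N : ℕ) (hN : 1 ≤ N) (p : Fin N → Bool) (K : ℕ) :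
    ex (hcWalk N p K) wH = (((N:ℝ)-1)/((N:ℝ)+1))^K * (wH p - 1/2) + 1/2 := by
  induction K with
  | zero => simp [hcWalk, ex_pure]
  | succ K ih =>
    rw [hcWalk, ex_bind]
    simp_rw [ex_hcStep N hN]
    have h : ∀ a, (hcWalk N p K a).toReal *
        ((((N:ℝ)-1)/((N:ℝ)+1)) * wH a + 1/((N:ℝ)+1))
        = (((N:ℝ)-1)/((N:ℝ)+1)) * ((hcWalk N p K a).toReal * wH a)
          + (1/((N:ℝ)+1)) * (hcWalk N p K a).toReal := by
      intro a; ring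
    simp_rw [h, Finset.sum_add_distrib, ← Finset.mul_sum]
    rw [sum_toReal_eq_one]
    rw [show (∑ a, (hcWalk N p K a).toReal * wH a) = ex (hcWalk N p K) wH from rfl, ih]
    have hN1 : (N : ℝ) + 1 ≠ 0 := by positivity
    have key : ((N:ℝ)-1)/((N:ℝ)+1) * (1/2) + 1/((N:ℝ)+1) = 1/2 := by
      rw [div_mul_eq_mul_div, div_add_div _ _ hN1 hN1, div_eq_div_iff (by positivity) (by norm_num)]
      ring
    rw [pow_succ]; linear_combination key

lemma wH_nonneg {N : ℕ} (q : Fin N → Bool) : 0 ≤ wH q := by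
  apply mul_nonneg
  · positivity
  · positivity

lemma wH_le_one {N : ℕ} (q : Fin N → Bool) : wH q ≤ 1 := by
  rcases Nat.eq_zero_or_pos N with h | h
  · subst h; simp [wH]
  · have hN0 : (0:ℝ) < (N : ℝ) := by exact_mod_cast h
    rw [wH]
    have hc : ((Finset.univ.filter fun j => q j = true).card : ℝ) ≤ (N : ℝ) := by
      have := Finset.card_filter_le (Finset.univ : Finset (Fin N)) (fun j => q j = true)
      simp only [Finset.card_univ, Fintype.card_fin] at this
      exact_mod_cast this
    calc (1 / (N:ℝ)) * _ ≤ (1 / (N:ℝ)) * (N:ℝ) := by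
          apply mul_le_mul_of_nonneg_left hc (by positivity)
      _ = 1 := by field_simp

/-- **TV lower bound for the lazy hypercube walk.** -/
theorem hcWalk_tv_lower (N K : ℕ) (hN : 1 ≤ N) :
    (∀ p₁ p₂ : Fin N → Bool,
      ENNReal.ofReal ((((N : ℝ) - 1) / ((N : ℝ) + 1)) ^ K * |wH p₁ - wH p₂|)
        ≤ tvDist (hcWalk N p₁ K) (hcWalk N p₂ K)) ∧
    ENNReal.ofReal ((((N : ℝ) - 1) / ((N : ℝ) + 1)) ^ K)
      ≤ tvDist (hcWalk N (fun _ => false) K) (hcWalk N (fun _ => true) K) := by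
  have hc0 : (0:ℝ) ≤ ((N : ℝ) - 1) / ((N : ℝ) + 1) := by
    have : (1:ℝ) ≤ (N:ℝ) := by exact_mod_cast hN
    apply div_nonneg <;> linarith
  have main : ∀ p₁ p₂ : Fin N → Bool,
      ENNReal.ofReal ((((N : ℝ) - 1) / ((N : ℝ) + 1)) ^ K * |wH p₁ - wH p₂|)
        ≤ tvDist (hcWalk N p₁ K) (hcWalk N p₂ K) := by
    intro p₁ p₂
    have h := abs_ex_sub_le (hcWalk N p₁ K) (hcWalk N p₂ K) wH wH_nonneg wH_le_one
    have heq : ex (hcWalk N p₁ K) wH - ex (hcWalk N p₂ K) wH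
        = (((N:ℝ)-1)/((N:ℝ)+1))^K * (wH p₁ - wH p₂) := by
      rw [ex_hcWalk N hN p₁ K, ex_hcWalk N hN p₂ K]; ring
    rw [heq, abs_mul, abs_of_nonneg (pow_nonneg hc0 K)] at h
    exact h
  refine ⟨main, ?_⟩
  have h := main (fun _ => false) (fun _ => true)
  have hN0 : (N : ℝ) ≠ 0 := Nat.cast_ne_zero.mpr (by omega)
  have h0 : wH (fun _ : Fin N => false) = 0 := by simp [wH]
  have h1 : wH (fun _ : Fin N => true) = 1 := by
    simp [wH, Finset.filter_true_of_mem, Finset.card_univ]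
    field_simp
  rw [h0, h1] at h
  simpa using h
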